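/- Let Y ~ NHG(S, G, T) be the number of good items drawn before the T-th bad item when drawing without replacement from a population of S items with G good and B = S - G bad items (B ≥ T), and let L = Y + T. Then for any integer k with 1 ≤ k < T, E[(T-1)_k / (L-1)_k] = (B)_k / (S)_k, where (x)_k = x(x-1)···(x-k+1) is the falling factorial. -/

import Mathlib

open Finset

lemma aux_desc (n g k : ℕ) (hg : g ≤ n) (hk : k ≤ n - g) :
    (n - g).descFactorial k * n.choose g = n.descFactorial k * (n - k).choose g := by
  induction k with
  | zero => simp
  | succ k ih =>
    have hk' : k ≤ n - g := Nat.le_of_succ_le hk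
    rw [Nat.descFactorial_succ, Nat.descFactorial_succ]
    have key : (n - g - k) * ((n - k).choose g) = (n - k) * ((n - (k+1)).choose g) := by
      set m := n - k with hm
      have hm1 : 1 ≤ m := by omega
      have h1 : m - g = n - g - k := by omega
      have h2 : n - (k+1) = m - 1 := by omega
      rw [← h1, h2]
      have e1 : m.choose (g+1) * (g+1) = m.choose g * (m - g) := Nat.choose_succ_right_eq m g
      have e2 := Nat.add_one_mul_choose_eq (m-1) g
      rw [Nat.sub_add_cancel hm1] at e2
      calc (m - g) * m.choose g = m.choose g * (m - g) := mul_comm _ _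
        _ = m.choose (g+1) * (g+1) := e1.symm
        _ = m * (m-1).choose g := e2.symm
    calc (n - g - k) * (n-g).descFactorial k * n.choose g
        = (n - g - k) * ((n-g).descFactorial k * n.choose g) := by ring
      _ = (n - g - k) * (n.descFactorial k * (n-k).choose g) := by rw [ih hk']
      _ = n.descFactorial k * ((n - g - k) * (n-k).choose g) := by ring
      _ = n.descFactorial k * ((n - k) * (n - (k+1)).choose g) := by rw [key]
      _ = (n - k) * n.descFactorial k * (n - (k+1)).choose g := by ring

lemma aux_vdm (a : ℕ) : ∀ b n : ℕ, ∑ g ∈ range (n+1), (g+a).choose g * (n-g+b).choose (n-g)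
    = (n+a+b+1).choose n := by
  induction a with
  | zero =>
    intro b n
    have h1 : ∀ g ∈ range (n+1), (g+0).choose g * (n-g+b).choose (n-g) = (n-g+b).choose (n-g) := by
      intro g _; simp
    rw [Finset.sum_congr rfl h1]
    have h2 := Finset.sum_range_reflect (fun i => (i+b).choose i) (n+1)
    simp only [Nat.add_sub_cancel] at h2
    rw [h2]
    have h3 : ∀ i ∈ range (n+1), (i+b).choose i = (i+b).choose b := by
      intro i _
      rw [← Nat.choose_symm (Nat.le_add_right i b), Nat.add_sub_cancel_left]
    rw [Finset.sum_congr rfl h3, Nat.sum_range_add_choose]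
    rw [← Nat.choose_symm (by omega : b+1 ≤ n+b+1)]
    congr 1 <;> omega
  | succ a iha =>
    intro b n
    induction n with
    | zero => simp
    | succ n ihn =>
      rw [Finset.sum_range_succ']
      have h1 : ∀ h ∈ range (n+1),
          (h+1+(a+1)).choose (h+1) * (n+1-(h+1)+b).choose (n+1-(h+1))
          = (h+(a+1)).choose h * (n-h+b).choose (n-h)
            + (h+1+a).choose (h+1) * (n+1-(h+1)+b).choose (n+1-(h+1)) := by
        intro h hh
        have e : h+1+(a+1) = (h+(a+1))+1 := by omega
        rw [e, Nat.choose_succ_succ (h+(a+1)) h, Nat.add_mul]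
        congr 2 <;> try omega
        · congr 1 <;> omega
        · congr 1; omega
      rw [Finset.sum_congr rfl h1, Finset.sum_add_distrib]
      rw [ihn]
      have h2 : (∑ h ∈ range (n+1), (h+1+a).choose (h+1) * (n+1-(h+1)+b).choose (n+1-(h+1)))
            + (0+(a+1)).choose 0 * (n+1-0+b).choose (n+1-0)
          = ∑ g ∈ range (n+2), (g+a).choose g * (n+1-g+b).choose (n+1-g) := by
        rw [Finset.sum_range_succ' (fun g => (g+a).choose g * (n+1-g+b).choose (n+1-g)) (n+1)]
        congr 1
        simp
      rw [add_assoc, h2, iha b (n+1),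
        show n+1+a+b+1 = n+(a+1)+b+1 by ring,
        show n+1+(a+1)+b+1 = (n+(a+1)+b+1)+1 by ring,
        Nat.choose_succ_succ', Nat.choose_succ_succ' (n+(a+1)+b+1) n,
        ← Nat.choose_succ_succ']

/-- The probability mass function of the negative hypergeometric distribution
`NHG(S, G, T)`. -/
noncomputable def nhgWeight (S G T g : ℕ) : ℝ :=
  (Nat.choose (g + T - 1) g * Nat.choose (S - T - g) (G - g) : ℝ) / (Nat.choose S G : ℝ)

/-- **Inverse factorial moments of the negative hypergeometric stopping time.**
With `Y ~ NHG(S, G, T)`, `B = S - G ≥ T`, and `L = Y + T`, for any `1 ≤ k < T`,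
`E[(T-1)_k / (L-1)_k] = (B)_k / (S)_k`, where `(x)_k` is the falling factorial. -/
theorem nhg_inverse_factorial_moment (S B G T k : ℕ) (hG : G = S - B) (hBS : B ≤ S)
    (hTB : T ≤ B) (hk1 : 1 ≤ k) (hkT : k < T) :
    ∑ g ∈ Finset.range (G + 1),
        ((Nat.descFactorial (T - 1) k : ℝ) / (Nat.descFactorial (g + T - 1) k : ℝ))
          * nhgWeight S G T g
      = (Nat.descFactorial B k : ℝ) / (Nat.descFactorial S k : ℝ) := by
  have hGB : G + B = S := by omega
  have hGS : G ≤ S := by omega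
  have hCSG : (0:ℝ) < (S.choose G : ℝ) := by exact_mod_cast Nat.choose_pos hGS
  have hSk : (0:ℝ) < (S.descFactorial k : ℝ) := by
    have : S.descFactorial k ≠ 0 := fun h => by
      have := Nat.descFactorial_eq_zero_iff_lt.mp h; omega
    exact_mod_cast Nat.pos_of_ne_zero this
  -- termwise rewrite
  have hterm : ∀ g ∈ Finset.range (G+1),
      ((Nat.descFactorial (T - 1) k : ℝ) / (Nat.descFactorial (g + T - 1) k : ℝ))
          * nhgWeight S G T g
      = ((g + T - 1 - k).choose g * (S - T - g).choose (G - g) : ℝ) / (S.choose G : ℝ) := by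
    intro g _
    have hd := aux_desc (g + T - 1) g k (by omega) (by omega)
    rw [show g + T - 1 - g = T - 1 by omega] at hd
    have hdc : ((T-1).descFactorial k : ℝ) * ((g+T-1).choose g : ℝ)
        = ((g+T-1).descFactorial k : ℝ) * ((g+T-1-k).choose g : ℝ) := by exact_mod_cast hd
    have hne : ((g+T-1).descFactorial k : ℝ) ≠ 0 := by
      have : (g+T-1).descFactorial k ≠ 0 := fun h => by
        have := Nat.descFactorial_eq_zero_iff_lt.mp h; omega
      exact_mod_cast this
    rw [nhgWeight]
    field_simp
    linear_combination (((S - T - g).choose (G - g) : ℝ)) * hdc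
  rw [Finset.sum_congr rfl hterm, ← Finset.sum_div]
  -- nat sum identity
  have hsum : ∑ g ∈ Finset.range (G+1), (g + T - 1 - k).choose g * (S - T - g).choose (G - g)
      = (S - k).choose G := by
    have hv := aux_vdm (T-1-k) (B-T) G
    have : ∀ g ∈ Finset.range (G+1),
        (g + T - 1 - k).choose g * (S - T - g).choose (G - g)
        = (g + (T-1-k)).choose g * (G - g + (B-T)).choose (G - g) := by
      intro g hg
      simp only [Finset.mem_range] at hg
      congr 2 <;> omega
    rw [Finset.sum_congr rfl this, hv]
    congr 1
    omega
  have hsumc : (∑ g ∈ Finset.range (G+1),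
      ((g + T - 1 - k).choose g : ℝ) * ((S - T - g).choose (G - g) : ℝ))
      = ((S - k).choose G : ℝ) := by exact_mod_cast hsum
  rw [hsumc]
  -- final ratio identity
  have hfin := aux_desc S G k hGS (by omega)
  rw [show S - G = B by omega] at hfin
  have hfinc : (B.descFactorial k : ℝ) * (S.choose G : ℝ)
      = (S.descFactorial k : ℝ) * ((S-k).choose G : ℝ) := by exact_mod_cast hfin
  rw [div_eq_div_iff hCSG.ne' hSk.ne']
  linear_combination -hfinc
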